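/- For all integers n, m ≥ 3, f(n,m) = C(m+n-4, n-2), where C denotes the binomial coefficient. That is, the largest cardinality of a finite set of points in the plane, in general position and with pairwise distinct x-coordinates, containing no n-cup and no m-cap, equals C(m+n-4, n-2). -/

import Mathlib

/-!
Common definitions: points in the plane, general position, distinct x-coordinates,
cups, caps, convex position, and the combinatorial functions from the paper.
-/

open Finset

/-- A point in the Euclidean plane, with `p.1` its x-coordinate and `p.2` its y-coordinate. -/
abbrev Pt : Type := ℝ × ℝ

/-- A set of points is in general position if no three (distinct) of its points are collinear. -/
def GenPos (S : Set Pt) : Prop :=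
  ∀ p ∈ S, ∀ q ∈ S, ∀ r ∈ S, p ≠ q → p ≠ r → q ≠ r → ¬ Collinear ℝ ({p, q, r} : Set Pt)

/-- A set of points has pairwise distinct x-coordinates. -/
def DistinctX (S : Set Pt) : Prop :=
  ∀ p ∈ S, ∀ q ∈ S, p ≠ q → p.1 ≠ q.1

/-- The slope of the segment from `p` to `q`. -/
noncomputable def PtSlope (p q : Pt) : ℝ := (q.2 - p.2) / (q.1 - p.1)

/-- `f 0, f 1, …, f (k-1)` is a `k`-cup in `P`: the points lie in `P`, are listed in
increasing order of x-coordinate, and the slopes of consecutive segments strictly increase. -/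
def IsCupSeq (k : ℕ) (P : Set Pt) (f : ℕ → Pt) : Prop :=
  (∀ i, i < k → f i ∈ P) ∧
  (∀ i j, i < j → j < k → (f i).1 < (f j).1) ∧
  (∀ i, i + 2 < k → PtSlope (f i) (f (i + 1)) < PtSlope (f (i + 1)) (f (i + 2)))

/-- `f 0, f 1, …, f (k-1)` is a `k`-cap in `P`: the points lie in `P`, are listed in
increasing order of x-coordinate, and the slopes of consecutive segments strictly decrease. -/
def IsCapSeq (k : ℕ) (P : Set Pt) (f : ℕ → Pt) : Prop :=
  (∀ i, i < k → f i ∈ P) ∧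
  (∀ i j, i < j → j < k → (f i).1 < (f j).1) ∧
  (∀ i, i + 2 < k → PtSlope (f i) (f (i + 1)) > PtSlope (f (i + 1)) (f (i + 2)))

/-- `P` contains a `k`-cup. -/
def HasCup (k : ℕ) (P : Set Pt) : Prop := ∃ f : ℕ → Pt, IsCupSeq k P f

/-- `P` contains a `k`-cap. -/
def HasCap (k : ℕ) (P : Set Pt) : Prop := ∃ f : ℕ → Pt, IsCapSeq k P f

/-- `S` is `(n, m)`-free: it contains no `n`-cup and no `m`-cap. -/
def IsFree (n m : ℕ) (S : Set Pt) : Prop := ¬ HasCup n S ∧ ¬ HasCap m S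

/-- A set of points is in convex position: every point of the set is a vertex (extreme point)
of its convex hull, i.e. no point lies in the convex hull of the others. -/
def ConvexPos (S : Set Pt) : Prop := ∀ p ∈ S, p ∉ convexHull ℝ (S \ {p})

/-- `S` contains `n` points in convex position. -/
def HasConvexNGon (n : ℕ) (S : Set Pt) : Prop :=
  ∃ T : Finset Pt, ↑T ⊆ S ∧ T.card = n ∧ ConvexPos ↑T

/-- The set of cardinalities of finite planar point sets, in general position with pairwise
distinct x-coordinates, containing no `n`-cup and no `m`-cap.  The Erdős–Szekeres cup–cap
number `f(n, m)` is the greatest element of this set. -/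
def CupCapCards (n m : ℕ) : Set ℕ :=
  {N : ℕ | ∃ S : Finset Pt, S.card = N ∧ GenPos ↑S ∧ DistinctX ↑S ∧
    ¬ HasCup n ↑S ∧ ¬ HasCap m ↑S}

/-- The defining property of the Erdős–Szekeres number `f(n) = N`: `N` is the smallest
positive integer such that every set of `N` points in general position in the plane
contains `n` points in convex position. -/
def IsESNumber (n N : ℕ) : Prop :=
  IsLeast {N : ℕ | 0 < N ∧
    ∀ S : Finset Pt, GenPos ↑S → S.card = N → HasConvexNGon n ↑S} N

/-- The point `r` lies strictly below the (non-vertical) line through `p` and `q`. -/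
noncomputable def StrictlyBelow (p q r : Pt) : Prop :=
  r.2 < p.2 + PtSlope p q * (r.1 - p.1)

/-- The point `s ∈ S` is `(m, l)`-good: for every `n ≥ 4` and every finite set `B` of at most
`n - 2` points such that `S ∪ B` is in general position with pairwise distinct x-coordinates
and contains an `(n-1)`-cup with leftmost point `s` and rightmost point in `B`, the set
`S ∪ B` contains an `l`-cap whose two rightmost points lie in `S`, or an `m`-cup whose two
leftmost points lie in `S`, or `n` points in convex position. -/
def IsGoodPoint (m l : ℕ) (S : Finset Pt) (s : Pt) : Prop :=
  ∀ n : ℕ, 4 ≤ n → ∀ B : Finset Pt, B.card ≤ n - 2 →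
    GenPos ↑(S ∪ B) → DistinctX ↑(S ∪ B) →
    (∃ f : ℕ → Pt, IsCupSeq (n - 1) ↑(S ∪ B) f ∧ f 0 = s ∧ f (n - 2) ∈ B) →
    ((∃ f : ℕ → Pt, IsCapSeq l ↑(S ∪ B) f ∧ f (l - 2) ∈ S ∧ f (l - 1) ∈ S) ∨
     (∃ f : ℕ → Pt, IsCupSeq m ↑(S ∪ B) f ∧ f 0 ∈ S ∧ f 1 ∈ S) ∨
     HasConvexNGon n ↑(S ∪ B))

/-- The weight functions `wᵢ(m, k)` from the paper. -/
def w (i m k : ℕ) : ℕ :=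
  if i = 4 then
    Nat.choose (m + k - 6) (k - 2) + Nat.choose (m + k - 7) (k - 3) +
      2 * Nat.choose (m + k - 8) (k - 4)
  else if k < i then 0
  else (i - 1) * Nat.choose (m + k - i - 4) (k - i)

/-- `g(m, l) = Σ_{i=4}^{∞} wᵢ(m, l) = Σ_{i=4}^{l} wᵢ(m, l)` (the sum is finite since
`wᵢ(m, l) = 0` for `i > l`). -/
def g (m l : ℕ) : ℕ := ∑ i ∈ Finset.Icc 4 l, w i m l

/-- For all integers `n, m ≥ 3`, the largest cardinality of a finite planar
point set in general position with pairwise distinct x-coordinates containing no `n`-cup and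
no `m`-cap equals `C(m + n - 4, n - 2)`. -/
-- ====== helpers ======

lemma IsCupSeq.mono' {k : ℕ} {P Q : Set Pt} {f : ℕ → Pt} (h : IsCupSeq k P f) (hPQ : P ⊆ Q) :
    IsCupSeq k Q f := ⟨fun i hi => hPQ (h.1 i hi), h.2.1, h.2.2⟩

lemma IsCapSeq.mono' {k : ℕ} {P Q : Set Pt} {f : ℕ → Pt} (h : IsCapSeq k P f) (hPQ : P ⊆ Q) :
    IsCapSeq k Q f := ⟨fun i hi => hPQ (h.1 i hi), h.2.1, h.2.2⟩

lemma HasCup.mono' {k : ℕ} {P Q : Set Pt} (h : HasCup k P) (hPQ : P ⊆ Q) : HasCup k Q :=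
  h.imp fun _ hf => hf.mono' hPQ

lemma HasCap.mono' {k : ℕ} {P Q : Set Pt} (h : HasCap k P) (hPQ : P ⊆ Q) : HasCap k Q :=
  h.imp fun _ hf => hf.mono' hPQ

lemma distinctX_mono {S T : Set Pt} (h : DistinctX S) (hTS : T ⊆ S) : DistinctX T :=
  fun p hp q hq => h p (hTS hp) q (hTS hq)

lemma seq_card_le {k : ℕ} {S : Finset Pt} {f : ℕ → Pt}
    (hm : ∀ i, i < k → f i ∈ S)
    (hx : ∀ i j, i < j → j < k → (f i).1 < (f j).1) : k ≤ S.card := by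
  have h1 : ((Finset.range k).image f).card = k := by
    rw [Finset.card_image_of_injOn, Finset.card_range]
    intro i hi j hj hij
    simp only [Finset.coe_range, Set.mem_Iio] at hi hj
    by_contra hne
    rcases Nat.lt_or_ge i j with h | h
    · exact absurd (congrArg Prod.fst hij) (ne_of_lt (hx i j h hj))
    · exact absurd (congrArg Prod.fst hij) (ne_of_gt (hx j i (lt_of_le_of_ne h (Ne.symm hne)) hi))
  calc k = ((Finset.range k).image f).card := h1.symm
    _ ≤ S.card := Finset.card_le_card (by
        intro p hp
        simp only [Finset.mem_image, Finset.mem_range] at hp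
        obtain ⟨i, hi, rfl⟩ := hp
        exact hm i hi)

-- ====== collinearity vs slopes ======

lemma collinear_of_slope_eq {p q r : Pt} (h1 : p.1 < q.1) (h2 : q.1 < r.1)
    (hs : PtSlope p q = PtSlope q r) : Collinear ℝ ({p, q, r} : Set Pt) := by
  have hA : q.1 - p.1 ≠ 0 := sub_ne_zero.mpr (ne_of_gt h1)
  have hB : r.1 - q.1 ≠ 0 := sub_ne_zero.mpr (ne_of_gt h2)
  rw [collinear_iff_of_mem (Set.mem_insert p {q, r})]
  refine ⟨q - p, ?_⟩
  intro x hx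
  rcases hx with rfl | rfl | rfl
  · exact ⟨0, by simp⟩
  · exact ⟨1, by simp⟩
  · refine ⟨(x.1 - p.1) / (q.1 - p.1), ?_⟩
    have hcross : (q.2 - p.2) * (x.1 - q.1) = (x.2 - q.2) * (q.1 - p.1) := by
      unfold PtSlope at hs
      field_simp at hs
      linarith [hs]
    have h1' : ((x.1 - p.1) / (q.1 - p.1)) * (q.1 - p.1) = x.1 - p.1 := div_mul_cancel₀ _ hA
    have h2' : ((x.1 - p.1) / (q.1 - p.1)) * (q.2 - p.2) = x.2 - p.2 := by
      rw [div_mul_eq_mul_div, div_eq_iff hA]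
      linear_combination hcross
    have : x = ((x.1 - p.1) / (q.1 - p.1)) • (q - p) + p := by
      apply Prod.ext
      · simp only [Prod.fst_add, Prod.smul_fst, Prod.fst_sub, smul_eq_mul]
        linarith [h1']
      · simp only [Prod.snd_add, Prod.smul_snd, Prod.snd_sub, smul_eq_mul]
        linarith [h2']
    simpa using this

lemma slope_eq_of_collinear {p q r : Pt} (h1 : p.1 < q.1) (h2 : q.1 < r.1)
    (hc : Collinear ℝ ({p, q, r} : Set Pt)) : PtSlope p q = PtSlope q r := by
  rw [collinear_iff_of_mem (Set.mem_insert p {q, r})] at hc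
  obtain ⟨v, hv⟩ := hc
  obtain ⟨tq, hq⟩ := hv q (by simp)
  obtain ⟨tr, hr⟩ := hv r (by simp)
  have hq1 : q.1 = tq * v.1 + p.1 := by rw [hq]; simp
  have hq2 : q.2 = tq * v.2 + p.2 := by rw [hq]; simp
  have hr1 : r.1 = tr * v.1 + p.1 := by rw [hr]; simp
  have hr2 : r.2 = tr * v.2 + p.2 := by rw [hr]; simp
  have hv1 : v.1 ≠ 0 := by
    intro h0; rw [h0] at hq1; simp at hq1; rw [hq1] at h1; exact lt_irrefl _ h1
  have htq : tq ≠ 0 := by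
    intro h0; rw [h0] at hq1; simp at hq1; rw [hq1] at h1; exact lt_irrefl _ h1
  have htrq : tr - tq ≠ 0 := by
    intro h0
    have he : tr = tq := by linarith
    rw [hq1, hr1, he] at h2
    exact lt_irrefl _ h2
  unfold PtSlope
  have e1 : q.2 - p.2 = tq * v.2 := by rw [hq2]; ring
  have e2 : q.1 - p.1 = tq * v.1 := by rw [hq1]; ring
  have e3 : r.2 - q.2 = (tr - tq) * v.2 := by rw [hr2, hq2]; ring
  have e4 : r.1 - q.1 = (tr - tq) * v.1 := by rw [hr1, hq1]; ring
  rw [e1, e2, e3, e4, mul_div_mul_left _ _ htq, mul_div_mul_left _ _ htrq]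

def NoColl (S : Set Pt) : Prop :=
  ∀ p ∈ S, ∀ q ∈ S, ∀ r ∈ S, p.1 < q.1 → q.1 < r.1 → PtSlope p q ≠ PtSlope q r

lemma noColl_of_genPos {S : Set Pt} (hg : GenPos S) : NoColl S := by
  intro p hp q hq r hr h1 h2 hs
  have hpq : p ≠ q := fun h => absurd (congrArg Prod.fst h) (ne_of_lt h1)
  have hqr : q ≠ r := fun h => absurd (congrArg Prod.fst h) (ne_of_lt h2)
  have hpr : p ≠ r := fun h => absurd (congrArg Prod.fst h) (ne_of_lt (h1.trans h2))
  exact hg p hp q hq r hr hpq hpr hqr (collinear_of_slope_eq h1 h2 hs)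

lemma sorted_triple {p q r : Pt} (hpq : p.1 ≠ q.1) (hpr : p.1 ≠ r.1) (hqr : q.1 ≠ r.1) :
    ∃ a b c : Pt, a.1 < b.1 ∧ b.1 < c.1 ∧ ({a, b, c} : Set Pt) = {p, q, r} := by
  rcases lt_trichotomy p.1 q.1 with h1 | h1 | h1
  · rcases lt_trichotomy q.1 r.1 with h2 | h2 | h2
    · exact ⟨p, q, r, h1, h2, rfl⟩
    · exact absurd h2 hqr
    · rcases lt_trichotomy p.1 r.1 with h3 | h3 | h3
      · exact ⟨p, r, q, h3, h2, by ext x; simp only [Set.mem_insert_iff, Set.mem_singleton_iff]; tauto⟩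
      · exact absurd h3 hpr
      · exact ⟨r, p, q, h3, h1, by ext x; simp only [Set.mem_insert_iff, Set.mem_singleton_iff]; tauto⟩
  · exact absurd h1 hpq
  · rcases lt_trichotomy p.1 r.1 with h2 | h2 | h2
    · exact ⟨q, p, r, h1, h2, by ext x; simp only [Set.mem_insert_iff, Set.mem_singleton_iff]; tauto⟩
    · exact absurd h2 hpr
    · rcases lt_trichotomy q.1 r.1 with h3 | h3 | h3
      · exact ⟨q, r, p, h3, h2, by ext x; simp only [Set.mem_insert_iff, Set.mem_singleton_iff]; tauto⟩
      · exact absurd h3 hqr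
      · exact ⟨r, q, p, h3, h1, by ext x; simp only [Set.mem_insert_iff, Set.mem_singleton_iff]; tauto⟩

lemma genPos_of_noColl {S : Set Pt} (hd : DistinctX S) (hnc : NoColl S) : GenPos S := by
  intro p hp q hq r hr hpq hpr hqr hc
  obtain ⟨a, b, c, hab, hbc, hset⟩ :=
    sorted_triple (hd p hp q hq hpq) (hd p hp r hr hpr) (hd q hq r hr hqr)
  have hsub : ({a, b, c} : Set Pt) ⊆ S := by
    rw [hset]
    intro x hx
    rcases hx with rfl | rfl | rfl <;> assumption
  have ha : a ∈ S := hsub (by simp)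
  have hb : b ∈ S := hsub (by simp)
  have hcS : c ∈ S := hsub (by simp)
  exact hnc a ha b hb c hcS hab hbc (slope_eq_of_collinear hab hbc (hset ▸ hc))

-- ====== enumeration by x-coordinate ======

lemma card_imageX {S : Finset Pt} (hd : DistinctX ↑S) :
    (S.image Prod.fst).card = S.card := by
  apply Finset.card_image_of_injOn
  intro p hp q hq h
  by_contra hne
  exact hd p (Finset.mem_coe.mpr hp) q (Finset.mem_coe.mpr hq) hne h

noncomputable def enumX (S : Finset Pt) : ℕ → Pt := fun i =>
  if h : i < (S.image Prod.fst).card then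
    (Finset.mem_image.mp (((S.image Prod.fst).orderIsoOfFin rfl ⟨i, h⟩).2)).choose
  else (0, 0)

lemma enumX_mem {S : Finset Pt} {i : ℕ} (h : i < (S.image Prod.fst).card) :
    enumX S i ∈ S := by
  unfold enumX
  rw [dif_pos h]
  exact (Finset.mem_image.mp (((S.image Prod.fst).orderIsoOfFin rfl ⟨i, h⟩).2)).choose_spec.1

lemma enumX_fst {S : Finset Pt} {i : ℕ} (h : i < (S.image Prod.fst).card) :
    (enumX S i).1 = ((S.image Prod.fst).orderIsoOfFin rfl ⟨i, h⟩ : ℝ) := by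
  unfold enumX
  rw [dif_pos h]
  exact (Finset.mem_image.mp (((S.image Prod.fst).orderIsoOfFin rfl ⟨i, h⟩).2)).choose_spec.2

lemma enumX_lt {S : Finset Pt} {i j : ℕ} (hij : i < j) (hj : j < (S.image Prod.fst).card) :
    (enumX S i).1 < (enumX S j).1 := by
  have hi : i < (S.image Prod.fst).card := lt_trans hij hj
  rw [enumX_fst hi, enumX_fst hj]
  exact Subtype.coe_lt_coe.mpr (((S.image Prod.fst).orderIsoOfFin rfl).strictMono
    (show (⟨i, hi⟩ : Fin _) < ⟨j, hj⟩ from hij))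

lemma cap_full {S : Finset Pt} (hnc : NoColl ↑S) (hcup : ¬ HasCup 3 ↑S) {m : ℕ}
    (hm : m ≤ (S.image Prod.fst).card) : HasCap m ↑S := by
  refine ⟨enumX S, fun i hi => Finset.mem_coe.mpr (enumX_mem (lt_of_lt_of_le hi hm)),
    fun i j hij hj => enumX_lt hij (lt_of_lt_of_le hj hm), fun i hi => ?_⟩
  have h01 : (enumX S i).1 < (enumX S (i+1)).1 :=
    enumX_lt (by omega) (by omega)
  have h12 : (enumX S (i+1)).1 < (enumX S (i+2)).1 :=
    enumX_lt (by omega) (by omega)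
  have hne := hnc (enumX S i) (Finset.mem_coe.mpr (enumX_mem (by omega)))
    (enumX S (i+1)) (Finset.mem_coe.mpr (enumX_mem (by omega)))
    (enumX S (i+2)) (Finset.mem_coe.mpr (enumX_mem (by omega))) h01 h12
  have hnlt : ¬ (PtSlope (enumX S i) (enumX S (i+1)) < PtSlope (enumX S (i+1)) (enumX S (i+2))) := by
    intro hlt
    apply hcup
    refine ⟨fun j => enumX S (i+j), fun j hj => Finset.mem_coe.mpr (enumX_mem (by omega)),
      fun a b hab hb => enumX_lt (by omega) (by omega), fun j hj => ?_⟩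
    have hj0 : j = 0 := by omega
    subst hj0
    exact hlt
  exact hne.lt_or_gt.resolve_left hnlt

lemma cup_full {S : Finset Pt} (hnc : NoColl ↑S) (hcap : ¬ HasCap 3 ↑S) {m : ℕ}
    (hm : m ≤ (S.image Prod.fst).card) : HasCup m ↑S := by
  refine ⟨enumX S, fun i hi => Finset.mem_coe.mpr (enumX_mem (lt_of_lt_of_le hi hm)),
    fun i j hij hj => enumX_lt hij (lt_of_lt_of_le hj hm), fun i hi => ?_⟩
  have h01 : (enumX S i).1 < (enumX S (i+1)).1 :=
    enumX_lt (by omega) (by omega)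
  have h12 : (enumX S (i+1)).1 < (enumX S (i+2)).1 :=
    enumX_lt (by omega) (by omega)
  have hne := hnc (enumX S i) (Finset.mem_coe.mpr (enumX_mem (by omega)))
    (enumX S (i+1)) (Finset.mem_coe.mpr (enumX_mem (by omega)))
    (enumX S (i+2)) (Finset.mem_coe.mpr (enumX_mem (by omega))) h01 h12
  have hngt : ¬ (PtSlope (enumX S i) (enumX S (i+1)) > PtSlope (enumX S (i+1)) (enumX S (i+2))) := by
    intro hgt
    apply hcap
    refine ⟨fun j => enumX S (i+j), fun j hj => Finset.mem_coe.mpr (enumX_mem (by omega)),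
      fun a b hab hb => enumX_lt (by omega) (by omega), fun j hj => ?_⟩
    have hj0 : j = 0 := by omega
    subst hj0
    exact hgt
  exact hne.lt_or_gt.resolve_right hngt

-- ====== upper bound ======

lemma pascal_key {n m : ℕ} (hn : 4 ≤ n) (hm : 4 ≤ m) :
    Nat.choose (m + n - 5) (n - 3) + Nat.choose (m + n - 5) (n - 2) =
      Nat.choose (m + n - 4) (n - 2) := by
  obtain ⟨a, rfl⟩ : ∃ a, n = a + 4 := ⟨n - 4, by omega⟩
  obtain ⟨b, rfl⟩ : ∃ b, m = b + 4 := ⟨m - 4, by omega⟩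
  have e1 : b + 4 + (a + 4) - 5 = a + b + 3 := by omega
  have e2 : a + 4 - 3 = a + 1 := by omega
  have e3 : a + 4 - 2 = a + 2 := by omega
  have e4 : b + 4 + (a + 4) - 4 = a + b + 4 := by omega
  rw [e1, e2, e3, e4]
  exact (Nat.choose_succ_succ (a + b + 3) (a + 1)).symm

lemma ub_main : ∀ K n m : ℕ, n + m ≤ K → 3 ≤ n → 3 ≤ m → ∀ S : Finset Pt,
    DistinctX ↑S → NoColl ↑S → ¬ HasCup n ↑S → ¬ HasCap m ↑S →
    S.card ≤ Nat.choose (m + n - 4) (n - 2) := by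
  intro K
  induction K with
  | zero => intro n m h hn hm; omega
  | succ K ih =>
    intro n m hK hn hm S hd hnc hcup hcap
    rcases eq_or_lt_of_le hn with h3 | hn4
    · -- n = 3
      subst h3
      rw [show m + 3 - 4 = m - 1 by omega, show (3:ℕ) - 2 = 1 from rfl, Nat.choose_one_right]
      by_contra hcon
      push_neg at hcon
      exact hcap (cap_full hnc hcup (by rw [card_imageX hd]; omega))
    rcases eq_or_lt_of_le hm with h3m | hm4
    · -- m = 3
      subst h3m
      rw [show 3 + n - 4 = n - 1 by omega]
      have h1 : n - 2 ≤ n - 1 := by omega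
      rw [← Nat.choose_symm h1, show n - 1 - (n - 2) = 1 by omega, Nat.choose_one_right]
      by_contra hcon
      push_neg at hcon
      exact hcup (cup_full hnc hcap (by rw [card_imageX hd]; omega))
    -- main step: 4 ≤ n, 4 ≤ m
    classical
    set T := S.filter (fun p => ∃ f : ℕ → Pt, IsCupSeq (n-1) ↑S f ∧ f (n-2) = p) with hTdef
    have hTsub : T ⊆ S := Finset.filter_subset _ _
    have hTsub' : (↑T : Set Pt) ⊆ ↑S := Finset.coe_subset.mpr hTsub
    have hSdsub : (↑(S \ T) : Set Pt) ⊆ ↑S := by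
      rw [Finset.coe_sdiff]; exact Set.diff_subset
    -- no (n-1)-cup in S \ T
    have h1 : ¬ HasCup (n-1) ↑(S \ T) := by
      rintro ⟨f, hf⟩
      have hfS : IsCupSeq (n-1) ↑S f := hf.mono' hSdsub
      have hmemd : f (n-2) ∈ ↑(S \ T) := hf.1 (n-2) (by omega)
      have hmemT : f (n-2) ∈ T :=
        Finset.mem_filter.mpr ⟨Finset.mem_coe.mp (hfS.1 (n-2) (by omega)), ⟨f, hfS, rfl⟩⟩
      exact (Finset.mem_sdiff.mp (Finset.mem_coe.mp hmemd)).2 hmemT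
    have h2 : ¬ HasCap m ↑(S \ T) := fun h => hcap (h.mono' hSdsub)
    have hA : (S \ T).card ≤ Nat.choose (m + n - 5) (n - 3) := by
      have := ih (n-1) m (by omega) (by omega) hm (S \ T)
        (distinctX_mono hd hSdsub)
        (fun p hp q hq r hr => hnc p (hSdsub hp) q (hSdsub hq) r (hSdsub hr)) h1 h2
      rwa [show m + (n-1) - 4 = m + n - 5 by omega, show (n-1) - 2 = n - 3 by omega] at this
    have hB : T.card ≤ Nat.choose (m + n - 5) (n - 2) := by
      by_contra hlt
      push_neg at hlt
      by_cases hc : HasCup n ↑T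
      · exact hcup (hc.mono' hTsub')
      by_cases hc2 : HasCap (m-1) ↑T
      · -- the gluing argument
        obtain ⟨g, hg⟩ := hc2
        have hg0T : g 0 ∈ T := Finset.mem_coe.mp (hg.1 0 (by omega))
        obtain ⟨-, f, hf, hfg⟩ := Finset.mem_filter.mp hg0T
        have hx1 : (f (n-3)).1 < (f (n-2)).1 := hf.2.1 (n-3) (n-2) (by omega) (by omega)
        have hx2 : (g 0).1 < (g 1).1 := hg.2.1 0 1 (by omega) (by omega)
        have hfn3S : f (n-3) ∈ (↑S : Set Pt) := hf.1 (n-3) (by omega)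
        have hg0S : g 0 ∈ (↑S : Set Pt) := hTsub' (hg.1 0 (by omega))
        have hg1S : g 1 ∈ (↑S : Set Pt) := hTsub' (hg.1 1 (by omega))
        have hne : PtSlope (f (n-3)) (g 0) ≠ PtSlope (g 0) (g 1) :=
          hnc _ hfn3S _ hg0S _ hg1S (hfg ▸ hx1) hx2
        rcases hne.lt_or_gt with hlt2 | hgt2
        · -- extend the cup: n-cup in S
          apply hcup
          refine ⟨fun i => if i < n - 1 then f i else g 1, fun i hi => ?_, fun i j hij hj => ?_, fun i hi => ?_⟩
          · by_cases h : i < n - 1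
            · simp only [if_pos h]; exact hf.1 i h
            · simp only [if_neg h]; exact hg1S
          · by_cases h : j < n - 1
            · simp only [if_pos h, if_pos (show i < n - 1 by omega)]
              exact hf.2.1 i j hij h
            · simp only [if_neg h, if_pos (by omega : i < n - 1)]
              have hile : (f i).1 ≤ (f (n-2)).1 := by
                rcases eq_or_lt_of_le (show i ≤ n - 2 by omega) with he | hlt3
                · rw [he]
                · exact le_of_lt (hf.2.1 i (n-2) hlt3 (by omega))
              calc (f i).1 ≤ (f (n-2)).1 := hile
                _ = (g 0).1 := by rw [hfg]
                _ < (g 1).1 := hx2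
          · by_cases h : i + 2 < n - 1
            · simp only [if_pos (by omega : i < n - 1), if_pos (by omega : i + 1 < n - 1), if_pos h]
              exact hf.2.2 i (by omega)
            · have hi2 : i + 2 = n - 1 := by omega
              have hieq : i = n - 3 := by omega
              have hieq1 : i + 1 = n - 2 := by omega
              simp only [if_pos (by omega : i < n - 1), if_pos (by omega : i + 1 < n - 1),
                if_neg (by omega : ¬ i + 2 < n - 1)]
              rw [hieq1, hfg, hieq]
              exact hlt2
        · -- extend the cap: m-cap in S
          apply hcap
          refine ⟨fun i => if i = 0 then f (n-3) else g (i - 1), fun i hi => ?_, fun i j hij hj => ?_, fun i hi => ?_⟩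
          · by_cases h : i = 0
            · simp only [if_pos h]; exact hfn3S
            · simp only [if_neg h]; exact hTsub' (hg.1 (i-1) (by omega))
          · by_cases h : i = 0
            · simp only [if_pos h, if_neg (by omega : ¬ j = 0)]
              have hle : (g 0).1 ≤ (g (j-1)).1 := by
                rcases eq_or_lt_of_le (show 0 ≤ j - 1 by omega) with he | hlt3
                · rw [← he]
                · exact le_of_lt (hg.2.1 0 (j-1) hlt3 (by omega))
              calc (f (n-3)).1 < (f (n-2)).1 := hx1
                _ = (g 0).1 := by rw [hfg]
                _ ≤ (g (j-1)).1 := hle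
            · simp only [if_neg h, if_neg (by omega : ¬ j = 0)]
              exact hg.2.1 (i-1) (j-1) (by omega) (by omega)
          · by_cases h : i = 0
            · subst h
              simp only [if_pos rfl, if_neg (by omega : ¬ (0:ℕ) + 1 = 0),
                if_neg (by omega : ¬ (0:ℕ) + 2 = 0)]
              norm_num
              exact hgt2
            · simp only [if_neg h, if_neg (by omega : ¬ i + 1 = 0), if_neg (by omega : ¬ i + 2 = 0)]
              have e1 : i + 1 - 1 = (i - 1) + 1 := by omega
              have e2 : i + 2 - 1 = (i - 1) + 2 := by omega
              rw [e1, e2]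
              exact hg.2.2 (i-1) (by omega)
      · have := ih n (m-1) (by omega) hn (by omega) T
          (distinctX_mono hd hTsub')
          (fun p hp q hq r hr => hnc p (hTsub' hp) q (hTsub' hq) r (hTsub' hr)) hc hc2
        rw [show (m-1) + n - 4 = m + n - 5 by omega] at this
        omega
    have hcardeq : (S \ T).card + T.card = S.card := Finset.card_sdiff_add_card_eq_card hTsub
    have := pascal_key (by omega) (by omega) (n := n) (m := m)
    omega

-- ====== affine transformations ======

noncomputable def affT (α β γ δ : ℝ) (p : Pt) : Pt := (α * p.1 + β, γ * p.2 + δ)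

lemma affT_slope (α β γ δ : ℝ) (p q : Pt) :
    PtSlope (affT α β γ δ p) (affT α β γ δ q) = (γ / α) * PtSlope p q := by
  unfold affT PtSlope
  simp only
  rw [div_mul_div_comm]
  congr 1 <;> ring

lemma affT_inj {α γ : ℝ} (hα : α ≠ 0) (hγ : γ ≠ 0) (β δ : ℝ) :
    Function.Injective (affT α β γ δ) := by
  intro p q h
  have h1 : α * p.1 + β = α * q.1 + β := congrArg Prod.fst h
  have h2 : γ * p.2 + δ = γ * q.2 + δ := congrArg Prod.snd h
  exact Prod.ext (mul_left_cancel₀ hα (by linarith)) (mul_left_cancel₀ hγ (by linarith))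

lemma affT_lt_iff {α : ℝ} (hα : 0 < α) (β γ δ : ℝ) (p q : Pt) :
    (affT α β γ δ p).1 < (affT α β γ δ q).1 ↔ p.1 < q.1 := by
  show α * p.1 + β < α * q.1 + β ↔ _
  rw [add_lt_add_iff_right, mul_lt_mul_iff_right₀ hα]

lemma IsCupSeq.affT_img {k : ℕ} {α γ : ℝ} (hα : 0 < α) (hγ : 0 < γ) (β δ : ℝ)
    {P : Set Pt} {f : ℕ → Pt} (h : IsCupSeq k P f) :
    IsCupSeq k (affT α β γ δ '' P) (fun i => affT α β γ δ (f i)) :=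
  ⟨fun i hi => ⟨f i, h.1 i hi, rfl⟩,
   fun i j hij hj => (affT_lt_iff hα β γ δ _ _).mpr (h.2.1 i j hij hj),
   fun i hi => by
     beta_reduce
     rw [affT_slope, affT_slope]
     exact mul_lt_mul_of_pos_left (h.2.2 i hi) (div_pos hγ hα)⟩

lemma IsCapSeq.affT_img {k : ℕ} {α γ : ℝ} (hα : 0 < α) (hγ : 0 < γ) (β δ : ℝ)
    {P : Set Pt} {f : ℕ → Pt} (h : IsCapSeq k P f) :
    IsCapSeq k (affT α β γ δ '' P) (fun i => affT α β γ δ (f i)) :=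
  ⟨fun i hi => ⟨f i, h.1 i hi, rfl⟩,
   fun i j hij hj => (affT_lt_iff hα β γ δ _ _).mpr (h.2.1 i j hij hj),
   fun i hi => by
     beta_reduce
     rw [affT_slope, affT_slope]
     exact mul_lt_mul_of_pos_left (h.2.2 i hi) (div_pos hγ hα)⟩

lemma affT_left_inv {α γ : ℝ} (hα : α ≠ 0) (hγ : γ ≠ 0) (β δ : ℝ) (p : Pt) :
    affT α⁻¹ (-(β/α)) γ⁻¹ (-(δ/γ)) (affT α β γ δ p) = p := by
  unfold affT
  apply Prod.ext <;> (simp only) <;> field_simp <;> ring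

lemma image_affT_inv {α γ : ℝ} (hα : α ≠ 0) (hγ : γ ≠ 0) (β δ : ℝ) (S : Finset Pt) :
    (S.image (affT α β γ δ)).image (affT α⁻¹ (-(β/α)) γ⁻¹ (-(δ/γ))) = S := by
  rw [Finset.image_image]
  have he : (affT α⁻¹ (-(β/α)) γ⁻¹ (-(δ/γ))) ∘ (affT α β γ δ) = id :=
    funext (affT_left_inv hα hγ β δ)
  rw [he, Finset.image_id]

lemma not_hasCup_image {k : ℕ} {α γ : ℝ} (hα : 0 < α) (hγ : 0 < γ) (β δ : ℝ) {S : Finset Pt}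
    (h : ¬ HasCup k ↑S) : ¬ HasCup k ↑(S.image (affT α β γ δ)) := by
  rintro ⟨f, hf⟩
  apply h
  have h2 := hf.affT_img (show (0:ℝ) < α⁻¹ by positivity) (show (0:ℝ) < γ⁻¹ by positivity)
    (-(β/α)) (-(δ/γ))
  have hset : affT α⁻¹ (-(β/α)) γ⁻¹ (-(δ/γ)) '' ↑(S.image (affT α β γ δ)) = ↑S := by
    rw [← Finset.coe_image, image_affT_inv (ne_of_gt hα) (ne_of_gt hγ)]
  exact ⟨_, hset ▸ h2⟩

lemma not_hasCap_image {k : ℕ} {α γ : ℝ} (hα : 0 < α) (hγ : 0 < γ) (β δ : ℝ) {S : Finset Pt}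
    (h : ¬ HasCap k ↑S) : ¬ HasCap k ↑(S.image (affT α β γ δ)) := by
  rintro ⟨f, hf⟩
  apply h
  have h2 := hf.affT_img (show (0:ℝ) < α⁻¹ by positivity) (show (0:ℝ) < γ⁻¹ by positivity)
    (-(β/α)) (-(δ/γ))
  have hset : affT α⁻¹ (-(β/α)) γ⁻¹ (-(δ/γ)) '' ↑(S.image (affT α β γ δ)) = ↑S := by
    rw [← Finset.coe_image, image_affT_inv (ne_of_gt hα) (ne_of_gt hγ)]
  exact ⟨_, hset ▸ h2⟩

lemma distinctX_image {α γ : ℝ} (hα : 0 < α) (hγ : 0 < γ) (β δ : ℝ) {S : Finset Pt}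
    (hd : DistinctX ↑S) : DistinctX ↑(S.image (affT α β γ δ)) := by
  intro p hp q hq hpq
  rw [Finset.coe_image] at hp hq
  obtain ⟨x, hx, rfl⟩ := hp
  obtain ⟨y, hy, rfl⟩ := hq
  have hxy : x ≠ y := fun h => hpq (by rw [h])
  have hne := hd x hx y hy hxy
  intro hcon
  simp only [affT] at hcon
  exact hne (mul_left_cancel₀ (ne_of_gt hα) (by linarith))

lemma noColl_image {α γ : ℝ} (hα : 0 < α) (hγ : 0 < γ) (β δ : ℝ) {S : Finset Pt}
    (hnc : NoColl ↑S) : NoColl ↑(S.image (affT α β γ δ)) := by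
  intro p hp q hq r hr h1 h2 hs
  rw [Finset.coe_image] at hp hq hr
  obtain ⟨x, hx, rfl⟩ := hp
  obtain ⟨y, hy, rfl⟩ := hq
  obtain ⟨z, hz, rfl⟩ := hr
  rw [affT_slope, affT_slope] at hs
  exact hnc x hx y hy z hz ((affT_lt_iff hα β γ δ _ _).mp h1)
    ((affT_lt_iff hα β γ δ _ _).mp h2)
    (mul_left_cancel₀ (ne_of_gt (div_pos hγ hα)) hs)

-- ====== normalization into a unit box with small slopes ======

lemma normalizePts (S : Finset Pt) (a c : ℝ) :
    ∃ S' : Finset Pt, S'.card = S.card ∧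
      (DistinctX ↑S → DistinctX ↑S') ∧ (NoColl ↑S → NoColl ↑S') ∧
      (∀ k, ¬ HasCup k ↑S → ¬ HasCup k ↑S') ∧ (∀ k, ¬ HasCap k ↑S → ¬ HasCap k ↑S') ∧
      (∀ p ∈ S', a ≤ p.1 ∧ p.1 ≤ a + 1 ∧ c ≤ p.2 ∧ p.2 ≤ c + 1) ∧
      (∀ p ∈ S', ∀ q ∈ S', |PtSlope p q| < 1) := by
  classical
  rcases S.eq_empty_or_nonempty with rfl | hne
  · exact ⟨∅, rfl, fun h => h, fun h => h, fun k h => h, fun k h => h,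
      fun p hp => absurd hp (Finset.notMem_empty p),
      fun p hp => absurd hp (Finset.notMem_empty p)⟩
  obtain ⟨p₀, hp₀⟩ := id hne
  obtain ⟨B, hB⟩ : BddAbove ((fun p : Pt => max |p.1| |p.2|) '' ↑S) :=
    (S.finite_toSet.image _).bddAbove
  set M : ℝ := 1 + max B 0 with hMdef
  have hMbound : ∀ p ∈ S, |p.1| ≤ M ∧ |p.2| ≤ M := by
    intro p hp
    have h1 : max |p.1| |p.2| ≤ B := hB ⟨p, Finset.mem_coe.mpr hp, rfl⟩
    have h2 : B ≤ max B 0 := le_max_left _ _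
    constructor
    · have := le_max_left |p.1| |p.2|; rw [hMdef]; linarith
    · have := le_max_right |p.1| |p.2|; rw [hMdef]; linarith
  have hM1 : 1 ≤ M := by
    have : (0:ℝ) ≤ max B 0 := le_max_right _ _
    rw [hMdef]; linarith
  have hM0 : 0 < M := by linarith
  obtain ⟨B2, hB2⟩ : BddAbove ((fun pq : Pt × Pt => |PtSlope pq.1 pq.2|) '' (↑S ×ˢ ↑S)) :=
    ((S.finite_toSet.prod S.finite_toSet).image _).bddAbove
  set K : ℝ := max B2 0 with hKdef
  have hKbound : ∀ p ∈ S, ∀ q ∈ S, |PtSlope p q| ≤ K := by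
    intro p hp q hq
    have h1 : |PtSlope p q| ≤ B2 :=
      hB2 ⟨(p, q), Set.mem_prod.mpr ⟨Finset.mem_coe.mpr hp, Finset.mem_coe.mpr hq⟩, rfl⟩
    have h2 : B2 ≤ max B2 0 := le_max_left _ _
    rw [hKdef]; linarith
  have hK0 : (0:ℝ) ≤ K := by rw [hKdef]; exact le_max_right _ _
  have hK1 : (0:ℝ) < K + 1 := by linarith
  set α : ℝ := 1 / (2 * M) with hαdef
  have hα : 0 < α := by positivity
  set γ : ℝ := min (1 / (2 * M)) (α / (K + 1)) with hγdef
  have hγ : 0 < γ := lt_min (by positivity) (div_pos hα hK1)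
  refine ⟨S.image (affT α (α * M + a) γ (γ * M + c)), ?_, ?_, ?_, ?_, ?_, ?_, ?_⟩
  · exact Finset.card_image_of_injective _ (affT_inj (ne_of_gt hα) (ne_of_gt hγ) _ _)
  · exact fun hd => distinctX_image hα hγ _ _ hd
  · exact fun hnc => noColl_image hα hγ _ _ hnc
  · exact fun k h => not_hasCup_image hα hγ _ _ h
  · exact fun k h => not_hasCap_image hα hγ _ _ h
  · intro p hp
    obtain ⟨x, hx, rfl⟩ := Finset.mem_image.mp hp
    obtain ⟨hx1, hx2⟩ := hMbound x hx
    have hx1' : -M ≤ x.1 ∧ x.1 ≤ M := abs_le.mp hx1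
    have hx2' : -M ≤ x.2 ∧ x.2 ≤ M := abs_le.mp hx2
    have hα2M : α * (2 * M) = 1 := by
      rw [hαdef]; field_simp
    have hγ2M : γ * (2 * M) ≤ 1 := by
      have : γ ≤ 1 / (2 * M) := min_le_left _ _
      calc γ * (2 * M) ≤ (1 / (2 * M)) * (2 * M) := by nlinarith
        _ = 1 := by field_simp
    show a ≤ α * x.1 + (α * M + a) ∧ α * x.1 + (α * M + a) ≤ a + 1 ∧
      c ≤ γ * x.2 + (γ * M + c) ∧ γ * x.2 + (γ * M + c) ≤ c + 1
    refine ⟨by nlinarith, by nlinarith, by nlinarith, by nlinarith⟩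
  · intro p hp q hq
    obtain ⟨x, hx, rfl⟩ := Finset.mem_image.mp hp
    obtain ⟨y, hy, rfl⟩ := Finset.mem_image.mp hq
    rw [affT_slope, abs_mul, abs_of_pos (div_pos hγ hα)]
    have hr : γ / α ≤ 1 / (K + 1) := by
      have : γ ≤ α / (K + 1) := min_le_right _ _
      rw [div_le_div_iff₀ hα hK1]
      calc γ * (K + 1) ≤ (α / (K + 1)) * (K + 1) := by nlinarith
        _ = 1 * α := by field_simp
    calc (γ / α) * |PtSlope x y| ≤ (1 / (K + 1)) * K :=
          mul_le_mul hr (hKbound x hx y hy) (abs_nonneg _) (by positivity)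
      _ < 1 := by rw [show (1 / (K + 1)) * K = K / (K + 1) by ring, div_lt_one hK1]; linarith

-- ====== parabola chains ======

noncomputable def capF : ℕ → Pt := fun i => ((i : ℝ), -(i : ℝ)^2)
noncomputable def cupF : ℕ → Pt := fun i => ((i : ℝ), (i : ℝ)^2)

lemma capF_slope {i j : ℕ} (h : i ≠ j) : PtSlope (capF i) (capF j) = -((i:ℝ) + (j:ℝ)) := by
  have hne : (j:ℝ) - (i:ℝ) ≠ 0 := by
    have : (i:ℝ) ≠ (j:ℝ) := Nat.cast_injective.ne h
    intro hc; exact this (by linarith)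
  show (-(j:ℝ)^2 - -(i:ℝ)^2) / ((j:ℝ) - (i:ℝ)) = _
  rw [div_eq_iff hne]; ring

lemma cupF_slope {i j : ℕ} (h : i ≠ j) : PtSlope (cupF i) (cupF j) = (i:ℝ) + (j:ℝ) := by
  have hne : (j:ℝ) - (i:ℝ) ≠ 0 := by
    have : (i:ℝ) ≠ (j:ℝ) := Nat.cast_injective.ne h
    intro hc; exact this (by linarith)
  show ((j:ℝ)^2 - (i:ℝ)^2) / ((j:ℝ) - (i:ℝ)) = _
  rw [div_eq_iff hne]; ring

lemma capF_inj : Function.Injective capF := by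
  intro i j h
  have h1 : (i:ℝ) = (j:ℝ) := congrArg Prod.fst h
  exact Nat.cast_injective h1

lemma cupF_inj : Function.Injective cupF := by
  intro i j h
  have h1 : (i:ℝ) = (j:ℝ) := congrArg Prod.fst h
  exact Nat.cast_injective h1

lemma parab_mem {k : ℕ} {F : ℕ → Pt} {p : Pt} (hp : p ∈ ((Finset.range k).image F)) :
    ∃ i, i < k ∧ p = F i := by
  obtain ⟨i, hi, rfl⟩ := Finset.mem_image.mp hp
  exact ⟨i, Finset.mem_range.mp hi, rfl⟩

lemma exists_cap_chain (k : ℕ) :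
    ∃ S : Finset Pt, S.card = k ∧ DistinctX ↑S ∧ NoColl ↑S ∧
      ¬ HasCup 3 ↑S ∧ ¬ HasCap (k+1) ↑S := by
  classical
  have hcard : ((Finset.range k).image capF).card = k := by
    rw [Finset.card_image_of_injective _ capF_inj, Finset.card_range]
  refine ⟨(Finset.range k).image capF, hcard, ?_, ?_, ?_, ?_⟩
  · intro p hp q hq hpq
    obtain ⟨i, hi, rfl⟩ := parab_mem (Finset.mem_coe.mp hp)
    obtain ⟨j, hj, rfl⟩ := parab_mem (Finset.mem_coe.mp hq)
    have hij : i ≠ j := fun h => hpq (by rw [h])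
    exact fun hc => hij (Nat.cast_injective (show (i:ℝ) = (j:ℝ) from hc))
  · intro p hp q hq r hr h1 h2 heq
    obtain ⟨i, hi, rfl⟩ := parab_mem (Finset.mem_coe.mp hp)
    obtain ⟨j, hj, rfl⟩ := parab_mem (Finset.mem_coe.mp hq)
    obtain ⟨l, hl, rfl⟩ := parab_mem (Finset.mem_coe.mp hr)
    have h1' : (i:ℝ) < (j:ℝ) := h1
    have h2' : (j:ℝ) < (l:ℝ) := h2
    rw [capF_slope (show i ≠ j from fun h => by rw [h] at h1'; exact lt_irrefl _ h1'),
      capF_slope (show j ≠ l from fun h => by rw [h] at h2'; exact lt_irrefl _ h2')] at heq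
    have : (i:ℝ) = (l:ℝ) := by linarith
    rw [this] at h1'
    linarith
  · rintro ⟨f, hmem, hx, hsl⟩
    obtain ⟨i0, hi0, he0⟩ := parab_mem (Finset.mem_coe.mp (hmem 0 (by norm_num)))
    obtain ⟨i1, hi1, he1⟩ := parab_mem (Finset.mem_coe.mp (hmem 1 (by norm_num)))
    obtain ⟨i2, hi2, he2⟩ := parab_mem (Finset.mem_coe.mp (hmem 2 (by norm_num)))
    have hx01 : (f 0).1 < (f 1).1 := hx 0 1 (by norm_num) (by norm_num)
    have hx12 : (f 1).1 < (f 2).1 := hx 1 2 (by norm_num) (by norm_num)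
    have hs := hsl 0 (by norm_num)
    rw [he0, he1, he2] at hs
    rw [he0, he1] at hx01
    rw [he1, he2] at hx12
    have hx01' : (i0:ℝ) < (i1:ℝ) := hx01
    have hx12' : (i1:ℝ) < (i2:ℝ) := hx12
    rw [capF_slope (show i0 ≠ i1 from fun h => by rw [h] at hx01'; exact lt_irrefl _ hx01'),
      capF_slope (show i1 ≠ i2 from fun h => by rw [h] at hx12'; exact lt_irrefl _ hx12')] at hs
    linarith
  · rintro ⟨f, hf⟩
    have := seq_card_le (fun i hi => Finset.mem_coe.mp (hf.1 i hi)) hf.2.1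
    omega

lemma exists_cup_chain (k : ℕ) :
    ∃ S : Finset Pt, S.card = k ∧ DistinctX ↑S ∧ NoColl ↑S ∧
      ¬ HasCup (k+1) ↑S ∧ ¬ HasCap 3 ↑S := by
  classical
  have hcard : ((Finset.range k).image cupF).card = k := by
    rw [Finset.card_image_of_injective _ cupF_inj, Finset.card_range]
  refine ⟨(Finset.range k).image cupF, hcard, ?_, ?_, ?_, ?_⟩
  · intro p hp q hq hpq
    obtain ⟨i, hi, rfl⟩ := parab_mem (Finset.mem_coe.mp hp)
    obtain ⟨j, hj, rfl⟩ := parab_mem (Finset.mem_coe.mp hq)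
    have hij : i ≠ j := fun h => hpq (by rw [h])
    exact fun hc => hij (Nat.cast_injective (show (i:ℝ) = (j:ℝ) from hc))
  · intro p hp q hq r hr h1 h2 heq
    obtain ⟨i, hi, rfl⟩ := parab_mem (Finset.mem_coe.mp hp)
    obtain ⟨j, hj, rfl⟩ := parab_mem (Finset.mem_coe.mp hq)
    obtain ⟨l, hl, rfl⟩ := parab_mem (Finset.mem_coe.mp hr)
    have h1' : (i:ℝ) < (j:ℝ) := h1
    have h2' : (j:ℝ) < (l:ℝ) := h2
    rw [cupF_slope (show i ≠ j from fun h => by rw [h] at h1'; exact lt_irrefl _ h1'),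
      cupF_slope (show j ≠ l from fun h => by rw [h] at h2'; exact lt_irrefl _ h2')] at heq
    have : (i:ℝ) = (l:ℝ) := by linarith
    rw [this] at h1'
    linarith
  · rintro ⟨f, hf⟩
    have := seq_card_le (fun i hi => Finset.mem_coe.mp (hf.1 i hi)) hf.2.1
    omega
  · rintro ⟨f, hmem, hx, hsl⟩
    obtain ⟨i0, hi0, he0⟩ := parab_mem (Finset.mem_coe.mp (hmem 0 (by norm_num)))
    obtain ⟨i1, hi1, he1⟩ := parab_mem (Finset.mem_coe.mp (hmem 1 (by norm_num)))
    obtain ⟨i2, hi2, he2⟩ := parab_mem (Finset.mem_coe.mp (hmem 2 (by norm_num)))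
    have hx01 : (f 0).1 < (f 1).1 := hx 0 1 (by norm_num) (by norm_num)
    have hx12 : (f 1).1 < (f 2).1 := hx 1 2 (by norm_num) (by norm_num)
    have hs := hsl 0 (by norm_num)
    rw [he0, he1, he2] at hs
    rw [he0, he1] at hx01
    rw [he1, he2] at hx12
    have hx01' : (i0:ℝ) < (i1:ℝ) := hx01
    have hx12' : (i1:ℝ) < (i2:ℝ) := hx12
    rw [cupF_slope (show i0 ≠ i1 from fun h => by rw [h] at hx01'; exact lt_irrefl _ hx01'),
      cupF_slope (show i1 ≠ i2 from fun h => by rw [h] at hx12'; exact lt_irrefl _ hx12')] at hs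
    linarith

-- ====== combining two blocks ======

lemma cross_slope {p q : Pt}
    (hp : 0 ≤ p.1 ∧ p.1 ≤ 1 ∧ 0 ≤ p.2 ∧ p.2 ≤ 1)
    (hq : 2 ≤ q.1 ∧ q.1 ≤ 3 ∧ 100 ≤ q.2 ∧ q.2 ≤ 101) :
    p.1 < q.1 ∧ 1 < PtSlope p q := by
  obtain ⟨h1, h2, h3, h4⟩ := hp
  obtain ⟨h5, h6, h7, h8⟩ := hq
  refine ⟨by linarith, ?_⟩
  unfold PtSlope
  rw [lt_div_iff₀ (by linarith : (0:ℝ) < q.1 - p.1)]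
  linarith

lemma combine {n m : ℕ} (hn : 3 ≤ n) (hm : 3 ≤ m) (L R : Finset Pt)
    (hLbox : ∀ p ∈ L, 0 ≤ p.1 ∧ p.1 ≤ 1 ∧ 0 ≤ p.2 ∧ p.2 ≤ 1)
    (hRbox : ∀ p ∈ R, 2 ≤ p.1 ∧ p.1 ≤ 3 ∧ 100 ≤ p.2 ∧ p.2 ≤ 101)
    (hLs : ∀ p ∈ L, ∀ q ∈ L, |PtSlope p q| < 1)
    (hRs : ∀ p ∈ R, ∀ q ∈ R, |PtSlope p q| < 1)
    (hLd : DistinctX ↑L) (hRd : DistinctX ↑R)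
    (hLnc : NoColl ↑L) (hRnc : NoColl ↑R)
    (hLcup : ¬ HasCup (n-1) ↑L) (hLcap : ¬ HasCap m ↑L)
    (hRcup : ¬ HasCup n ↑R) (hRcap : ¬ HasCap (m-1) ↑R) :
    (L ∪ R).card = L.card + R.card ∧ DistinctX ↑(L ∪ R) ∧ NoColl ↑(L ∪ R) ∧
      ¬ HasCup n ↑(L ∪ R) ∧ ¬ HasCap m ↑(L ∪ R) := by
  classical
  have hdisj : Disjoint L R := by
    rw [Finset.disjoint_left]
    intro p hpL hpR
    have h1 := (hLbox p hpL).2.1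
    have h2 := (hRbox p hpR).1
    linarith
  have hmemU : ∀ p : Pt, p ∈ (↑(L ∪ R) : Set Pt) → p ∈ L ∨ p ∈ R :=
    fun p hp => Finset.mem_union.mp (Finset.mem_coe.mp hp)
  have hLR : ∀ p ∈ L, ∀ q ∈ R, p.1 < q.1 :=
    fun p hp q hq => (cross_slope (hLbox p hp) (hRbox q hq)).1
  refine ⟨Finset.card_union_of_disjoint hdisj, ?_, ?_, ?_, ?_⟩
  · -- DistinctX
    intro p hp q hq hpq
    rcases hmemU p hp with hpL | hpR <;> rcases hmemU q hq with hqL | hqR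
    · exact hLd p (Finset.mem_coe.mpr hpL) q (Finset.mem_coe.mpr hqL) hpq
    · exact ne_of_lt (hLR p hpL q hqR)
    · exact (ne_of_lt (hLR q hqL p hpR)).symm
    · exact hRd p (Finset.mem_coe.mpr hpR) q (Finset.mem_coe.mpr hqR) hpq
  · -- NoColl
    intro p hp q hq r hr h1 h2 heq
    rcases hmemU p hp with hpL | hpR
    · rcases hmemU q hq with hqL | hqR
      · rcases hmemU r hr with hrL | hrR
        · exact hLnc p (Finset.mem_coe.mpr hpL) q (Finset.mem_coe.mpr hqL)
            r (Finset.mem_coe.mpr hrL) h1 h2 heq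
        · have hb := (cross_slope (hLbox q hqL) (hRbox r hrR)).2
          have ha := abs_lt.mp (hLs p hpL q hqL)
          rw [heq] at ha
          linarith [ha.2]
      · have hrR : r ∈ R := by
          rcases hmemU r hr with hrL | hrR
          · exfalso
            have := (hLbox r hrL).2.1
            have := (hRbox q hqR).1
            linarith
          · exact hrR
        have hb := (cross_slope (hLbox p hpL) (hRbox q hqR)).2
        have ha := abs_lt.mp (hRs q hqR r hrR)
        rw [← heq] at ha
        linarith [ha.2]
    · have hqR : q ∈ R := by
        rcases hmemU q hq with hqL | hqR
        · exfalso
          have := (hLbox q hqL).2.1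
          have := (hRbox p hpR).1
          linarith
        · exact hqR
      have hrR : r ∈ R := by
        rcases hmemU r hr with hrL | hrR
        · exfalso
          have := (hLbox r hrL).2.1
          have := (hRbox q hqR).1
          linarith
        · exact hrR
      exact hRnc p (Finset.mem_coe.mpr hpR) q (Finset.mem_coe.mpr hqR)
        r (Finset.mem_coe.mpr hrR) h1 h2 heq
  · -- no n-cup
    rintro ⟨f, hmem, hx, hsl⟩
    have hmem' : ∀ i, i < n → f i ∈ L ∨ f i ∈ R := fun i hi => hmemU _ (hmem i hi)
    by_cases hL : f (n-2) ∈ L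
    · apply hLcup
      refine ⟨f, ?_, fun i j hij hj => hx i j hij (by omega), fun i hi => hsl i (by omega)⟩
      intro i hi
      rcases eq_or_lt_of_le (show i ≤ n-2 by omega) with he | hlt
      · exact he ▸ Finset.mem_coe.mpr hL
      · rcases hmem' i (by omega) with h | h
        · exact Finset.mem_coe.mpr h
        · exfalso
          have hxi : (f i).1 < (f (n-2)).1 := hx i (n-2) hlt (by omega)
          have := (hRbox _ h).1
          have := (hLbox _ hL).2.1
          linarith
    · have hR2 : f (n-2) ∈ R := (hmem' (n-2) (by omega)).resolve_left hL
      by_cases h0 : f 0 ∈ L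
      · set t := Nat.findGreatest (fun i => f i ∈ L) (n-2) with ht
        have htL : f t ∈ L := by
          have hh := Nat.findGreatest_spec (P := fun i => f i ∈ L) (m := 0)
            (show 0 ≤ n-2 by omega) h0
          exact hh
        have htle : t ≤ n - 2 := Nat.findGreatest_le _
        have htlt : t < n - 2 := lt_of_le_of_ne htle (fun h => hL (h ▸ htL))
        have ht1 : f (t+1) ∈ R := by
          have hnL : f (t+1) ∉ L := fun hmem2 => by
            have := Nat.le_findGreatest (P := fun i => f i ∈ L) (show t+1 ≤ n-2 by omega) hmem2
            omega
          exact (hmem' (t+1) (by omega)).resolve_left hnL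
        have ht2 : f (t+2) ∈ R := by
          rcases hmem' (t+2) (by omega) with h | h
          · exfalso
            have hxi : (f (t+1)).1 < (f (t+2)).1 := hx (t+1) (t+2) (by omega) (by omega)
            have := (hRbox _ ht1).1
            have := (hLbox _ h).2.1
            linarith
          · exact h
        have hbig := (cross_slope (hLbox _ htL) (hRbox _ ht1)).2
        have hsmall := abs_lt.mp (hRs _ ht1 _ ht2)
        have hcon := hsl t (by omega)
        linarith [hsmall.2]
      · apply hRcup
        refine ⟨f, ?_, hx, hsl⟩
        intro i hi
        rcases hmem' i hi with h | h
        · exfalso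
          rcases Nat.eq_zero_or_pos i with rfl | hpos
          · exact h0 h
          · have hxi : (f 0).1 < (f i).1 := hx 0 i hpos hi
            have hfR : f 0 ∈ R := (hmem' 0 (by omega)).resolve_left h0
            have := (hRbox _ hfR).1
            have := (hLbox _ h).2.1
            linarith
        · exact Finset.mem_coe.mpr h
  · -- no m-cap
    rintro ⟨f, hmem, hx, hsl⟩
    have hmem' : ∀ i, i < m → f i ∈ L ∨ f i ∈ R := fun i hi => hmemU _ (hmem i hi)
    by_cases h1 : f 1 ∈ L
    · have h0 : f 0 ∈ L := by
        rcases hmem' 0 (by omega) with h | h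
        · exact h
        · exfalso
          have hxi : (f 0).1 < (f 1).1 := hx 0 1 (by omega) (by omega)
          have := (hRbox _ h).1
          have := (hLbox _ h1).2.1
          linarith
      by_cases hlast : f (m-1) ∈ L
      · apply hLcap
        refine ⟨f, ?_, hx, hsl⟩
        intro i hi
        rcases eq_or_lt_of_le (show i ≤ m-1 by omega) with he | hlt
        · exact he ▸ Finset.mem_coe.mpr hlast
        · rcases hmem' i hi with h | h
          · exact Finset.mem_coe.mpr h
          · exfalso
            have hxi : (f i).1 < (f (m-1)).1 := hx i (m-1) hlt (by omega)
            have := (hRbox _ h).1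
            have := (hLbox _ hlast).2.1
            linarith
      · have hRlast : f (m-1) ∈ R := (hmem' (m-1) (by omega)).resolve_left hlast
        have hex : ∃ i, f i ∈ R := ⟨m-1, hRlast⟩
        set t := Nat.find hex with ht
        have htR : f t ∈ R := Nat.find_spec hex
        have htle : t ≤ m - 1 := Nat.find_min' hex hRlast
        have ht0 : t ≠ 0 := by
          intro h
          rw [h] at htR
          have := (hLbox _ h0).2.1
          have := (hRbox _ htR).1
          linarith
        have ht1 : t ≠ 1 := by
          intro h
          rw [h] at htR
          have := (hLbox _ h1).2.1
          have := (hRbox _ htR).1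
          linarith
        have hsL : f (t-2) ∈ L := by
          have hnR : f (t-2) ∉ R := Nat.find_min hex (by omega)
          exact (hmem' (t-2) (by omega)).resolve_right hnR
        have hs1L : f (t-1) ∈ L := by
          have hnR : f (t-1) ∉ R := Nat.find_min hex (by omega)
          exact (hmem' (t-1) (by omega)).resolve_right hnR
        have hcon := hsl (t-2) (by omega)
        have e1 : t-2+1 = t-1 := by omega
        have e2 : t-2+2 = t := by omega
        rw [e1, e2] at hcon
        have hbig := (cross_slope (hLbox _ hs1L) (hRbox _ htR)).2
        have hsmall := abs_lt.mp (hLs _ hsL _ hs1L)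
        linarith [hsmall.2]
    · have h1R : f 1 ∈ R := (hmem' 1 (by omega)).resolve_left h1
      apply hRcap
      refine ⟨fun i => f (i+1), ?_, fun i j hij hj => hx (i+1) (j+1) (by omega) (by omega),
        ?_⟩
      · intro i hi
        have hfi : f (i+1) ∈ R := by
          rcases hmem' (i+1) (by omega) with h | h
          · exfalso
            rcases Nat.eq_zero_or_pos i with rfl | hpos
            · exact h1 h
            · have hxi : (f 1).1 < (f (i+1)).1 := hx 1 (i+1) (by omega) (by omega)
              have := (hRbox _ h1R).1
              have := (hLbox _ h).2.1
              linarith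
          · exact h
        exact Finset.mem_coe.mpr hfi
      · intro i hi
        show PtSlope (f (i+1)) (f (i+1+1)) > PtSlope (f (i+1+1)) (f (i+2+1))
        have e : i + 2 + 1 = i + 1 + 2 := by omega
        rw [e]
        exact hsl (i+1) (by omega)

-- ====== existence of extremal configurations ======

lemma exists_free : ∀ K n m : ℕ, n + m ≤ K → 3 ≤ n → 3 ≤ m →
    ∃ S : Finset Pt, S.card = Nat.choose (m + n - 4) (n - 2) ∧ DistinctX ↑S ∧ NoColl ↑S ∧
      ¬ HasCup n ↑S ∧ ¬ HasCap m ↑S := by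
  intro K
  induction K with
  | zero => intro n m h hn hm; omega
  | succ K ih =>
    intro n m hK hn hm
    rcases eq_or_lt_of_le hn with h3 | hn4
    · subst h3
      obtain ⟨S, hcard, hd, hnc, hcup, hcap⟩ := exists_cap_chain (m - 1)
      refine ⟨S, ?_, hd, hnc, hcup, ?_⟩
      · rw [hcard, show m + 3 - 4 = m - 1 by omega, show (3:ℕ) - 2 = 1 from rfl,
          Nat.choose_one_right]
      · rwa [show m - 1 + 1 = m by omega] at hcap
    rcases eq_or_lt_of_le hm with h3m | hm4
    · subst h3m
      obtain ⟨S, hcard, hd, hnc, hcup, hcap⟩ := exists_cup_chain (n - 1)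
      refine ⟨S, ?_, hd, hnc, ?_, hcap⟩
      · rw [hcard, show 3 + n - 4 = n - 1 by omega]
        have h1 : n - 2 ≤ n - 1 := by omega
        rw [← Nat.choose_symm h1, show n - 1 - (n - 2) = 1 by omega, Nat.choose_one_right]
      · rwa [show n - 1 + 1 = n by omega] at hcup
    · obtain ⟨L₀, hLcard, hLd, hLnc, hLcup, hLcap⟩ := ih (n-1) m (by omega) (by omega) hm
      obtain ⟨R₀, hRcard, hRd, hRnc, hRcup, hRcap⟩ := ih n (m-1) (by omega) hn (by omega)
      obtain ⟨L, hLc, hLd', hLnc', hLcup', hLcap', hLbox, hLs⟩ := normalizePts L₀ 0 0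
      obtain ⟨R, hRc, hRd', hRnc', hRcup', hRcap', hRbox, hRs⟩ := normalizePts R₀ 2 100
      simp only [zero_add] at hLbox
      rw [show (2:ℝ)+1 = 3 by norm_num, show (100:ℝ)+1 = 101 by norm_num] at hRbox
      obtain ⟨hcard, hd, hnc, hcup, hcap⟩ := combine hn hm L R hLbox hRbox hLs hRs
        (hLd' hLd) (hRd' hRd) (hLnc' hLnc) (hRnc' hRnc)
        (hLcup' (n-1) hLcup) (hLcap' m hLcap) (hRcup' n hRcup) (hRcap' (m-1) hRcap)
      refine ⟨L ∪ R, ?_, hd, hnc, hcup, hcap⟩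
      rw [hcard, hLc, hRc, hLcard, hRcard,
        show m + (n-1) - 4 = m + n - 5 by omega, show (n-1) - 2 = n - 3 by omega,
        show (m-1) + n - 4 = m + n - 5 by omega]
      exact pascal_key (by omega) (by omega)


theorem stmt_0 (n m : ℕ) (hn : 3 ≤ n) (hm : 3 ≤ m) :
    IsGreatest (CupCapCards n m) (Nat.choose (m + n - 4) (n - 2)) := by
  constructor
  · obtain ⟨S, hcard, hd, hnc, hcup, hcap⟩ := exists_free (n + m) n m le_rfl hn hm
    exact ⟨S, hcard, genPos_of_noColl hd hnc, hd, hcup, hcap⟩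
  · rintro N ⟨S, hcard, hg, hd, hcup, hcap⟩
    rw [← hcard]
    exact ub_main (n + m) n m le_rfl hn hm S hd (noColl_of_genPos hg) hcup hcap
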